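/- arXiv:2507.03966 — 2 statements merged into one kernel-verified Lean document; each statement's English description precedes it below -/
import Mathlib

section
/- Let c ∈ (−√2, √2) and β = √(2 − c²). For every κ with 0 < κ < 2β there exists a constant C > 0, depending only on c and κ, such that for every continuously differentiable f : ℝ → ℝ with f and f' bounded and ∫_ℝ f·Q_c = 0, the function g(x) = (1/Q_c(x))·∫_x^∞ f(y)·Q_c(y) dy satisfies ‖ρ^κ·g‖_{L²} + ‖ρ^κ·g'‖_{L²} ≤ C·‖ρ^{κ/2}·f‖_{L²}, where ρ(x) = sech(x). -/
open Real MeasureTheory Set Filter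

/-- The real part of the traveling-wave profile. -/
noncomputable def Rc (c x : ℝ) : ℝ :=
  Real.sqrt ((2 - c ^ 2) / 2) * Real.tanh (Real.sqrt (2 - c ^ 2) * x / 2)

/-- The soliton profile `Q_c(x) = (β²/2) sech²(βx/2)` with `β = √(2 - c²)`. -/
noncomputable def Q (c x : ℝ) : ℝ :=
  (Real.sqrt (2 - c ^ 2)) ^ 2 / 2
    * ((Real.cosh (Real.sqrt (2 - c ^ 2) * x / 2))⁻¹) ^ 2

/-- The weight `ρ(x) = sech x`. -/
noncomputable def rho (x : ℝ) : ℝ := (Real.cosh x)⁻¹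

private lemma cosh_le_exp_abs (x : ℝ) : Real.cosh x ≤ Real.exp |x| := by
  rw [Real.cosh_eq]
  have h1 : Real.exp x ≤ Real.exp |x| := Real.exp_le_exp.2 (le_abs_self x)
  have h2 : Real.exp (-x) ≤ Real.exp |x| := Real.exp_le_exp.2 (neg_le_abs x)
  linarith

private lemma exp_abs_le_two_cosh (x : ℝ) : Real.exp |x| ≤ 2 * Real.cosh x := by
  rw [Real.cosh_eq]
  rcases abs_choice x with h | h <;> rw [h] <;> nlinarith [Real.exp_pos x, Real.exp_pos (-x)]

private lemma sech_le (x : ℝ) : (Real.cosh x)⁻¹ ≤ 2 * Real.exp (-|x|) := by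
  have hc := Real.cosh_pos (x := x)
  rw [inv_eq_one_div, div_le_iff₀ hc]
  have h2 : Real.exp (-|x|) * Real.exp |x| = 1 := by rw [← Real.exp_add]; simp
  nlinarith [exp_abs_le_two_cosh x, Real.exp_pos (-|x|)]

private lemma le_sech (x : ℝ) : Real.exp (-|x|) ≤ (Real.cosh x)⁻¹ := by
  have hc := Real.cosh_pos (x := x)
  rw [inv_eq_one_div, le_div_iff₀ hc]
  have h2 : Real.exp (-|x|) * Real.exp |x| = 1 := by rw [← Real.exp_add]; simp
  nlinarith [cosh_le_exp_abs x, Real.exp_pos (-|x|)]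

private lemma integral_exp_neg_mul_Ioi {a : ℝ} (ha : 0 < a) (x : ℝ) :
    ∫ y in Ioi x, Real.exp (-(a * y)) = Real.exp (-(a * x)) / a := by
  have := MeasureTheory.integral_comp_mul_left_Ioi (fun u => Real.exp (-u)) x ha
  simp only [smul_eq_mul] at this
  rw [this, integral_exp_neg_Ioi]
  field_simp

private lemma integrable_exp_neg_mul_abs {a : ℝ} (ha : 0 < a) :
    Integrable (fun x : ℝ => Real.exp (-(a * |x|))) := by
  have h1 : IntegrableOn (fun x : ℝ => Real.exp (-(a * |x|))) (Ioi 0) := by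
    refine (exp_neg_integrableOn_Ioi 0 ha).congr_fun (fun y hy => ?_) measurableSet_Ioi
    rw [abs_of_pos hy]; simp only [neg_mul]
  have h2 : IntegrableOn (fun x : ℝ => Real.exp (-(a * |x|))) (Iic 0) := by
    refine (integrableOn_exp_mul_Iic ha 0).congr_fun (fun y hy => ?_) measurableSet_Iic
    rw [abs_of_nonpos hy]; ring_nf
  have := h2.union h1
  rw [Iic_union_Ioi] at this
  rwa [integrableOn_univ] at this

private lemma integral_exp_neg_mul_abs {a : ℝ} (ha : 0 < a) :
    ∫ x : ℝ, Real.exp (-(a * |x|)) = 2 / a := by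
  rw [← intervalIntegral.integral_Iic_add_Ioi ((integrable_exp_neg_mul_abs ha).integrableOn)
    ((integrable_exp_neg_mul_abs ha).integrableOn) (b := 0)]
  have h1 : ∫ x in Iic (0:ℝ), Real.exp (-(a * |x|)) = 1 / a := by
    rw [setIntegral_congr_fun measurableSet_Iic
      (g := fun y : ℝ => Real.exp (a * y)) (fun y hy => by rw [abs_of_nonpos hy]; ring_nf)]
    rw [integral_exp_mul_Iic ha 0]; simp
  have h2 : ∫ x in Ioi (0:ℝ), Real.exp (-(a * |x|)) = 1 / a := by
    rw [setIntegral_congr_fun measurableSet_Ioi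
      (g := fun y : ℝ => Real.exp (-(a * y))) (fun y hy => by rw [abs_of_pos hy])]
    rw [integral_exp_neg_mul_Ioi ha 0]; simp
  rw [h1, h2]; ring

private lemma cauchy_schwarz_integral (μ : Measure ℝ) (u v : ℝ → ℝ)
    (hu : AEStronglyMeasurable u μ) (hv : AEStronglyMeasurable v μ)
    (hu2 : Integrable (fun x => u x ^ 2) μ) (hv2 : Integrable (fun x => v x ^ 2) μ)
    (hun : ∀ x, 0 ≤ u x) (hvn : ∀ x, 0 ≤ v x) :
    ∫ x, u x * v x ∂μ ≤ Real.sqrt (∫ x, u x ^ 2 ∂μ) * Real.sqrt (∫ x, v x ^ 2 ∂μ) := by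
  have hpq : Real.HolderConjugate 2 2 := Real.HolderConjugate.two_two
  have h2 : (ENNReal.ofReal 2) = 2 := by simp [ENNReal.ofReal_ofNat]
  have hmu : MemLp u (ENNReal.ofReal 2) μ := by
    rw [h2]; exact (memLp_two_iff_integrable_sq hu).2 hu2
  have hmv : MemLp v (ENNReal.ofReal 2) μ := by
    rw [h2]; exact (memLp_two_iff_integrable_sq hv).2 hv2
  have := MeasureTheory.integral_mul_norm_le_Lp_mul_Lq hpq hmu hmv
  have e1 : ∀ x, ‖u x‖ * ‖v x‖ = u x * v x := fun x => by
    rw [Real.norm_of_nonneg (hun x), Real.norm_of_nonneg (hvn x)]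
  have e2 : ∀ (w : ℝ → ℝ), (∀ x, 0 ≤ w x) → (fun x => ‖w x‖ ^ (2:ℝ)) = fun x => w x ^ 2 := by
    intro w hw; funext x
    rw [Real.norm_of_nonneg (hw x), show (2:ℝ) = ((2:ℕ):ℝ) by norm_num, Real.rpow_natCast]
  simp only [e1] at this
  rw [e2 u hun, e2 v hvn] at this
  calc ∫ x, u x * v x ∂μ ≤ (∫ x, u x ^ 2 ∂μ) ^ (1/(2:ℝ)) * (∫ x, v x ^ 2 ∂μ) ^ (1/(2:ℝ)) := this
    _ = _ := by rw [Real.sqrt_eq_rpow, Real.sqrt_eq_rpow]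

private lemma exp_sq (t : ℝ) : (Real.exp t) ^ 2 = Real.exp (2 * t) := by
  rw [pow_two, ← Real.exp_add]; ring_nf

private lemma rpow_sq {a : ℝ} (ha : 0 ≤ a) (s : ℝ) : (a ^ s) ^ 2 = a ^ (2 * s) := by
  rw [show ((a ^ s) ^ 2 : ℝ) = (a ^ s) ^ ((2:ℕ):ℝ) from (Real.rpow_natCast _ 2).symm,
    ← Real.rpow_mul ha]
  ring_nf

private lemma abs_tanh_le_one (t : ℝ) : |Real.tanh t| ≤ 1 := by
  rw [Real.tanh_eq_sinh_div_cosh, abs_div, abs_of_pos (Real.cosh_pos (x := t)),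
    div_le_one (Real.cosh_pos (x := t)), Real.abs_sinh, ← Real.cosh_abs]
  exact (Real.sinh_lt_cosh _).le

set_option maxHeartbeats 8000000 in
/-- Weighted `L²` bounds for the bounded solution `g` of `S_c* g = f`:
for `0 < κ < 2β`, `‖ρ^κ g‖ + ‖ρ^κ g'‖ ≲ ‖ρ^{κ/2} f‖`. -/
theorem Sst_inverse_weighted_bounds (c : ℝ)
    (hc : c ∈ Set.Ioo (-Real.sqrt 2) (Real.sqrt 2)) (κ : ℝ)
    (hκ : 0 < κ) (hκ' : κ < 2 * Real.sqrt (2 - c ^ 2)) :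
    ∃ C > 0, ∀ f : ℝ → ℝ, ContDiff ℝ 1 f →
      (∃ M, ∀ x, |f x| ≤ M) → (∃ M, ∀ x, |deriv f x| ≤ M) →
      (∫ y, f y * Q c y) = 0 →
      Real.sqrt (∫ x,
          (rho x ^ κ * ((Q c x)⁻¹ * ∫ y in Set.Ioi x, f y * Q c y)) ^ 2)
        + Real.sqrt (∫ x,
          (rho x ^ κ
            * deriv (fun z => (Q c z)⁻¹ * ∫ y in Set.Ioi z, f y * Q c y) x) ^ 2)
      ≤ C * Real.sqrt (∫ x, (rho x ^ (κ / 2) * f x) ^ 2) := by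
  obtain ⟨hc1, hc2⟩ := hc
  have h2pos : (0:ℝ) < 2 - c ^ 2 := by
    have h := sq_lt_sq' hc1 hc2
    rw [Real.sq_sqrt (by norm_num : (0:ℝ) ≤ 2)] at h
    linarith
  set β := Real.sqrt (2 - c ^ 2) with hβdef
  have hβ : 0 < β := Real.sqrt_pos.2 h2pos
  have hβ2 : β ^ 2 = 2 - c ^ 2 := Real.sq_sqrt h2pos.le
  have hb : 0 < β - κ / 2 := by linarith
  set b := β - κ / 2 with hbdef
  have h2b : 0 < 2 * b := by linarith
  have hcoshpos : ∀ t : ℝ, 0 < Real.cosh t := fun t => Real.cosh_pos t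
  have hQeq : ∀ x, Q c x = β ^ 2 / 2 * ((Real.cosh (β * x / 2))⁻¹) ^ 2 := fun x => by
    rw [hβdef]; rfl
  have hQpos : ∀ x, 0 < Q c x := by
    intro x; rw [hQeq]
    have := hcoshpos (β * x / 2)
    positivity
  have habs2 : ∀ x : ℝ, |β * x / 2| = β * |x| / 2 := by
    intro x; rw [abs_div, abs_mul, abs_of_pos hβ, abs_two]
  have hexphalf : ∀ x : ℝ, (Real.exp (-|β * x / 2|)) ^ 2 = Real.exp (-(β * |x|)) := by
    intro x; rw [exp_sq, habs2]; ring_nf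
  have hQle : ∀ x, Q c x ≤ 2 * β ^ 2 * Real.exp (-(β * |x|)) := by
    intro x
    rw [hQeq]
    have h1 : (Real.cosh (β * x / 2))⁻¹ ≤ 2 * Real.exp (-|β * x / 2|) := sech_le _
    have h2 : ((Real.cosh (β * x / 2))⁻¹) ^ 2 ≤ (2 * Real.exp (-|β * x / 2|)) ^ 2 :=
      pow_le_pow_left₀ (inv_nonneg.2 (hcoshpos _).le) h1 2
    rw [mul_pow, hexphalf] at h2
    nlinarith [sq_nonneg β]
  have hQge : ∀ x, β ^ 2 / 2 * Real.exp (-(β * |x|)) ≤ Q c x := by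
    intro x
    rw [hQeq]
    have h1 : Real.exp (-|β * x / 2|) ≤ (Real.cosh (β * x / 2))⁻¹ := le_sech _
    have h2 : (Real.exp (-|β * x / 2|)) ^ 2 ≤ ((Real.cosh (β * x / 2))⁻¹) ^ 2 :=
      pow_le_pow_left₀ (Real.exp_nonneg _) h1 2
    rw [hexphalf] at h2
    nlinarith [sq_nonneg β]
  have hQinvle : ∀ x, (Q c x)⁻¹ ≤ 2 / β ^ 2 * Real.exp (β * |x|) := by
    intro x
    have h0 : (0:ℝ) < β ^ 2 / 2 * Real.exp (-(β * |x|)) := by positivity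
    have h1 : (Q c x)⁻¹ ≤ (β ^ 2 / 2 * Real.exp (-(β * |x|)))⁻¹ :=
      inv_anti₀ h0 (hQge x)
    refine h1.trans_eq ?_
    rw [mul_inv, ← Real.exp_neg, neg_neg]
    field_simp
  have hrhopos : ∀ x, 0 < rho x := fun x => inv_pos.2 (hcoshpos x)
  have hrho_le_one : ∀ x, rho x ≤ 1 := by
    intro x
    rw [show rho x = (Real.cosh x)⁻¹ from rfl, inv_eq_one_div, div_le_one (hcoshpos x)]
    exact Real.one_le_cosh x
  have hrpow_nonneg : ∀ (s : ℝ) (x : ℝ), 0 ≤ rho x ^ s :=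
    fun s x => Real.rpow_nonneg (hrhopos x).le s
  have hrpow_le_one : ∀ (s : ℝ), 0 ≤ s → ∀ x, rho x ^ s ≤ 1 :=
    fun s hs x => Real.rpow_le_one (hrhopos x).le (hrho_le_one x) hs
  have hrho_pow_le : ∀ x, rho x ^ κ ≤ 2 ^ κ * Real.exp (-(κ * |x|)) := by
    intro x
    have h1 : rho x ≤ 2 * Real.exp (-|x|) := sech_le x
    calc rho x ^ κ ≤ (2 * Real.exp (-|x|)) ^ κ :=
          Real.rpow_le_rpow (hrhopos x).le h1 hκ.le
      _ = 2 ^ κ * Real.exp (-(κ * |x|)) := by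
          rw [Real.mul_rpow (by norm_num) (Real.exp_nonneg _), ← Real.exp_mul]
          ring_nf
  have hrho_cosh : ∀ y, rho y ^ (κ / 2) * Real.cosh y ^ (κ / 2) = 1 := by
    intro y
    rw [show rho y = (Real.cosh y)⁻¹ from rfl, Real.inv_rpow (hcoshpos y).le,
      inv_mul_cancel₀ (Real.rpow_pos_of_pos (hcoshpos y) _).ne']
  have hcosh_rpow : ∀ y, Real.cosh y ^ (κ / 2) ≤ Real.exp (κ / 2 * |y|) := by
    intro y
    calc Real.cosh y ^ (κ / 2) ≤ (Real.exp |y|) ^ (κ / 2) :=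
          Real.rpow_le_rpow (hcoshpos y).le (cosh_le_exp_abs y) (by linarith)
      _ = Real.exp (κ / 2 * |y|) := by rw [← Real.exp_mul]; ring_nf
  set A := (2:ℝ) ^ κ * 4 / Real.sqrt (2 * b) with hAdef
  have hA : 0 < A := by
    have h1 : (0:ℝ) < 2 ^ κ := Real.rpow_pos_of_pos two_pos κ
    have h2 : 0 < Real.sqrt (2 * b) := Real.sqrt_pos.2 h2b
    positivity
  set C := A * Real.sqrt (2 / κ) + Real.sqrt (4 * β ^ 2 * A ^ 2 / κ + 2) with hCdef
  have hC : 0 < C := by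
    have h1 : 0 < A * Real.sqrt (2 / κ) :=
      mul_pos hA (Real.sqrt_pos.2 (div_pos two_pos hκ))
    have h2 : 0 < Real.sqrt (4 * β ^ 2 * A ^ 2 / κ + 2) := by
      refine Real.sqrt_pos.2 ?_
      have : 0 ≤ 4 * β ^ 2 * A ^ 2 / κ := by positivity
      linarith
    rw [hCdef]; linarith
  refine ⟨C, hC, ?_⟩
  intro f hf hfbdd _ hmean
  obtain ⟨M, hM⟩ := hfbdd
  have hM0 : 0 ≤ M := (abs_nonneg _).trans (hM 0)
  set φ := fun y => f y * Q c y with hφdef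
  have hQcont : Continuous (Q c) := by
    have hfun : Q c = fun x => β ^ 2 / 2 * ((Real.cosh (β * x / 2))⁻¹) ^ 2 := funext hQeq
    rw [hfun]
    have h1 : Continuous fun x : ℝ => Real.cosh (β * x / 2) := by
      exact Real.continuous_cosh.comp (by continuity)
    exact continuous_const.mul ((h1.inv₀ fun x => (hcoshpos _).ne').pow 2)
  have hφcont : Continuous φ := hf.continuous.mul hQcont
  have hφint : Integrable φ := by
    refine Integrable.mono' ((integrable_exp_neg_mul_abs hβ).const_mul (M * (2 * β ^ 2)))
      hφcont.aestronglyMeasurable (Eventually.of_forall fun x => ?_)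
    rw [Real.norm_eq_abs, hφdef, abs_mul, abs_of_pos (hQpos x)]
    calc |f x| * Q c x ≤ M * (2 * β ^ 2 * Real.exp (-(β * |x|))) :=
          mul_le_mul (hM x) (hQle x) (hQpos x).le hM0
      _ = M * (2 * β ^ 2) * Real.exp (-(β * |x|)) := by ring
  set F := fun x => ∫ y in Ioi x, φ y with hFdef
  set N := Real.sqrt (∫ x, (rho x ^ (κ / 2) * f x) ^ 2) with hNdef
  have hN0 : 0 ≤ N := Real.sqrt_nonneg _
  have hrhocont : Continuous rho := Real.continuous_cosh.inv₀ fun x => (hcoshpos x).ne'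
  have hrpowcont : ∀ s : ℝ, Continuous (fun x => rho x ^ s) :=
    fun s => hrhocont.rpow_const fun x => Or.inl (hrhopos x).ne'
  set h := fun y => rho y ^ (κ / 2) * |f y| with hhdef
  have hhcont : Continuous h := (hrpowcont _).mul hf.continuous.abs
  have hhnn : ∀ y, 0 ≤ h y := fun y => mul_nonneg (hrpow_nonneg _ y) (abs_nonneg _)
  have hsq_eq : ∀ y, h y ^ 2 = (rho y ^ (κ / 2) * f y) ^ 2 := fun y => by
    rw [hhdef]; simp only [mul_pow, sq_abs]
  have hh2int : Integrable (fun y => h y ^ 2) := by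
    refine Integrable.mono' ((integrable_exp_neg_mul_abs hκ).const_mul (M ^ 2 * 2 ^ κ))
      ((hhcont.pow 2).aestronglyMeasurable) (Eventually.of_forall fun x => ?_)
    rw [Real.norm_eq_abs, abs_of_nonneg (sq_nonneg _), hhdef]
    have e1 : (rho x ^ (κ / 2) * |f x|) ^ 2 = rho x ^ κ * |f x| ^ 2 := by
      rw [mul_pow, rpow_sq (hrhopos x).le]
      ring_nf
    rw [e1]
    have e2 : |f x| ^ 2 ≤ M ^ 2 := by nlinarith [hM x, abs_nonneg (f x)]
    calc rho x ^ κ * |f x| ^ 2 ≤ (2 ^ κ * Real.exp (-(κ * |x|))) * M ^ 2 :=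
          mul_le_mul (hrho_pow_le x) e2 (sq_nonneg _)
            (by positivity)
      _ = M ^ 2 * 2 ^ κ * Real.exp (-(κ * |x|)) := by ring
  have hN2 : ∫ x, (rho x ^ (κ / 2) * f x) ^ 2 = N ^ 2 := by
    rw [hNdef, Real.sq_sqrt (integral_nonneg fun x => sq_nonneg _)]
  have hint_sq : Integrable (fun x => (rho x ^ (κ / 2) * f x) ^ 2) :=
    hh2int.congr (Eventually.of_forall fun y => hsq_eq y)
  have hIic_sqrt_le : ∀ s : Set ℝ, MeasurableSet s →
      Real.sqrt (∫ y in s, h y ^ 2) ≤ N := by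
    intro s hs
    rw [hNdef]
    refine Real.sqrt_le_sqrt ?_
    have e3 : ∫ x, (rho x ^ (κ / 2) * f x) ^ 2 = ∫ x, h x ^ 2 :=
      integral_congr_ae (Eventually.of_forall fun y => (hsq_eq y).symm)
    rw [e3]
    exact setIntegral_le_integral hh2int (Eventually.of_forall fun y => sq_nonneg _)
  -- derivative of F
  have hFneg : ∀ x, F x = -∫ y in Iic x, φ y := by
    intro x
    have h0 := intervalIntegral.integral_Iic_add_Ioi (b := x)
      hφint.integrableOn hφint.integrableOn
    rw [hmean] at h0
    rw [hFdef]
    linarith [h0]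
  have hFeq : ∀ x, F x = (-∫ y in Iic 0, φ y) - ∫ y in (0:ℝ)..x, φ y := by
    intro x
    rw [hFneg x, ← intervalIntegral.integral_Iic_sub_Iic hφint.integrableOn hφint.integrableOn]
    ring
  have hFderiv : ∀ x, HasDerivAt F (-φ x) x := by
    intro x
    have h1 : HasDerivAt (fun u => ∫ y in (0:ℝ)..u, φ y) (φ x) x :=
      intervalIntegral.integral_hasDerivAt_right (hφcont.intervalIntegrable _ _)
        (hφcont.stronglyMeasurableAtFilter _ _) hφcont.continuousAt
    have h2 : HasDerivAt (fun u => (-∫ y in Iic 0, φ y) - ∫ y in (0:ℝ)..u, φ y) (-φ x) x :=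
      h1.const_sub _
    exact h2.congr_of_eventuallyEq (Eventually.of_forall fun u => hFeq u)
  set T := fun x => β * Real.tanh (β * x / 2) with hTdef
  have hTle : ∀ x, |T x| ≤ β := by
    intro x
    rw [hTdef, abs_mul, abs_of_pos hβ]
    nlinarith [abs_tanh_le_one (β * x / 2), abs_nonneg (Real.tanh (β * x / 2))]
  have hQderiv : ∀ x, HasDerivAt (Q c) (-(T x * Q c x)) x := by
    intro x
    have h1 : HasDerivAt (fun z : ℝ => β * z / 2) (β / 2) x := by
      simpa using ((hasDerivAt_id x).const_mul β).div_const 2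
    have h2 : HasDerivAt (fun z => Real.cosh (β * z / 2)) (Real.sinh (β * x / 2) * (β / 2)) x :=
      (Real.hasDerivAt_cosh _).comp x h1
    have h3 : HasDerivAt (fun z => (Real.cosh (β * z / 2))⁻¹)
        (-(Real.sinh (β * x / 2) * (β / 2)) / (Real.cosh (β * x / 2)) ^ 2) x :=
      h2.inv (hcoshpos _).ne'
    have h4 := (h3.pow 2).const_mul (β ^ 2 / 2)
    have h8 : HasDerivAt (fun z => β ^ 2 / 2 * ((Real.cosh (β * z / 2))⁻¹) ^ 2)
        (-(T x * Q c x)) x := by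
      refine h4.congr_deriv ?_
      simp only [hQeq x, hTdef, Real.tanh_eq_sinh_div_cosh]
      have hc0 := (hcoshpos (β * x / 2)).ne'
      field_simp
      have hc1 : Real.cosh (β * x * (1 / 2)) ≠ 0 := (hcoshpos _).ne'
      ring_nf
      rw [mul_inv_cancel₀ hc1]
      ring
    exact h8.congr_of_eventuallyEq (Eventually.of_forall hQeq)
  have hQinvderiv : ∀ x, HasDerivAt (fun z => (Q c z)⁻¹) (T x * (Q c x)⁻¹) x := by
    intro x
    have h5 := (hQderiv x).inv (hQpos x).ne'
    refine h5.congr_deriv ?_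
    have hq0 := (hQpos x).ne'
    field_simp
  have hGderiv : ∀ x, HasDerivAt (fun z => (Q c z)⁻¹ * F z)
      (T x * ((Q c x)⁻¹ * F x) - f x) x := by
    intro x
    have h6 := (hQinvderiv x).mul (hFderiv x)
    refine h6.congr_deriv ?_
    have hq0 := (hQpos x).ne'
    rw [hφdef]
    field_simp
    ring
  have habsf : ∀ y, |f y| = h y * Real.cosh y ^ (κ / 2) := by
    intro y
    simp only [hhdef]
    rw [mul_comm (rho y ^ (κ / 2)) |f y|, mul_assoc, hrho_cosh y, mul_one]
  have hmemh2 : MemLp h 2 := (memLp_two_iff_integrable_sq hhcont.aestronglyMeasurable).2 hh2int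
  have hFboundP : ∀ x, 0 ≤ x →
      |F x| ≤ 2 * β ^ 2 * (N * (Real.exp (-(b * x)) / Real.sqrt (2 * b))) := by
    intro x hx
    have hecont : Continuous fun y : ℝ => Real.exp (-(b * y)) :=
      Real.continuous_exp.comp (continuous_const.mul continuous_id).neg
    have he2int : IntegrableOn (fun y => Real.exp (-(b * y)) ^ 2) (Ioi x) := by
      refine (exp_neg_integrableOn_Ioi x h2b).congr_fun (fun y _ => ?_) measurableSet_Ioi
      rw [exp_sq]; ring_nf
    have hCS : ∫ y in Ioi x, h y * Real.exp (-(b * y)) ≤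
        Real.sqrt (∫ y in Ioi x, h y ^ 2) *
          Real.sqrt (∫ y in Ioi x, Real.exp (-(b * y)) ^ 2) :=
      cauchy_schwarz_integral _ _ _ hhcont.aestronglyMeasurable.restrict
        hecont.aestronglyMeasurable.restrict hh2int.integrableOn he2int hhnn
        (fun y => Real.exp_nonneg _)
    have hval : ∫ y in Ioi x, Real.exp (-(b * y)) ^ 2 = Real.exp (-(2 * b * x)) / (2 * b) := by
      rw [setIntegral_congr_fun measurableSet_Ioi
        (g := fun y => Real.exp (-(2 * b * y))) (fun y _ => by rw [exp_sq]; ring_nf)]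
      exact integral_exp_neg_mul_Ioi h2b x
    have hsqrt2 : Real.sqrt (∫ y in Ioi x, Real.exp (-(b * y)) ^ 2)
        = Real.exp (-(b * x)) / Real.sqrt (2 * b) := by
      rw [hval, show Real.exp (-(2 * b * x)) = (Real.exp (-(b * x))) ^ 2 from by
        rw [exp_sq]; ring_nf, Real.sqrt_div (sq_nonneg _), Real.sqrt_sq (Real.exp_nonneg _)]
    have step1 : |F x| ≤ ∫ y in Ioi x, |φ y| := by
      have := norm_integral_le_integral_norm (μ := volume.restrict (Ioi x)) φ
      simpa [Real.norm_eq_abs] using this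
    have hmaj : IntegrableOn (fun y => 2 * β ^ 2 * (h y * Real.exp (-(b * y)))) (Ioi x) := by
      have hmeme : MemLp (fun y => Real.exp (-(b * y))) 2 (volume.restrict (Ioi x)) :=
        (memLp_two_iff_integrable_sq hecont.aestronglyMeasurable.restrict).2 he2int
      have hsm := MemLp.smul (r := 1) hmeme (hmemh2.restrict (Ioi x))
      have hprod := memLp_one_iff_integrable.1 hsm
      have : Integrable (fun y => h y * Real.exp (-(b * y))) (volume.restrict (Ioi x)) := by
        exact hprod
      exact this.const_mul _
    have step2 : ∫ y in Ioi x, |φ y| ≤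
        ∫ y in Ioi x, 2 * β ^ 2 * (h y * Real.exp (-(b * y))) := by
      refine integral_mono_of_nonneg (Eventually.of_forall fun y => abs_nonneg _) hmaj ?_
      refine (ae_restrict_iff' measurableSet_Ioi).2 (Eventually.of_forall fun y hy => ?_)
      have hy0 : (0:ℝ) ≤ y := le_trans hx (le_of_lt hy)
      have e1 : |φ y| = (h y * Real.cosh y ^ (κ / 2)) * Q c y := by
        simp only [hφdef]
        rw [abs_mul, abs_of_pos (hQpos y), habsf y]
      have e2 : (h y * Real.cosh y ^ (κ / 2)) * Q c y ≤
          (h y * Real.exp (κ / 2 * y)) * (2 * β ^ 2 * Real.exp (-(β * y))) := by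
        have c1 : Real.cosh y ^ (κ / 2) ≤ Real.exp (κ / 2 * y) := by
          have := hcosh_rpow y; rwa [abs_of_nonneg hy0] at this
        have c2 : Q c y ≤ 2 * β ^ 2 * Real.exp (-(β * y)) := by
          have := hQle y; rwa [abs_of_nonneg hy0] at this
        exact mul_le_mul (mul_le_mul_of_nonneg_left c1 (hhnn y)) c2 (hQpos y).le
          (mul_nonneg (hhnn y) (Real.exp_nonneg _))
      have e3 : (h y * Real.exp (κ / 2 * y)) * (2 * β ^ 2 * Real.exp (-(β * y))) =
          2 * β ^ 2 * (h y * Real.exp (-(b * y))) := by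
        have e4 : Real.exp (κ / 2 * y) * Real.exp (-(β * y)) = Real.exp (-(b * y)) := by
          rw [← Real.exp_add]; congr 1; rw [hbdef]; ring
        calc (h y * Real.exp (κ / 2 * y)) * (2 * β ^ 2 * Real.exp (-(β * y)))
            = 2 * β ^ 2 * (h y * (Real.exp (κ / 2 * y) * Real.exp (-(β * y)))) := by ring
          _ = _ := by rw [e4]
      calc |φ y| = (h y * Real.cosh y ^ (κ / 2)) * Q c y := e1
        _ ≤ (h y * Real.exp (κ / 2 * y)) * (2 * β ^ 2 * Real.exp (-(β * y))) := e2
        _ = _ := e3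
    calc |F x| ≤ ∫ y in Ioi x, |φ y| := step1
      _ ≤ ∫ y in Ioi x, 2 * β ^ 2 * (h y * Real.exp (-(b * y))) := step2
      _ = 2 * β ^ 2 * ∫ y in Ioi x, h y * Real.exp (-(b * y)) := integral_const_mul _ _
      _ ≤ 2 * β ^ 2 * (Real.sqrt (∫ y in Ioi x, h y ^ 2) *
            Real.sqrt (∫ y in Ioi x, Real.exp (-(b * y)) ^ 2)) := by
          refine mul_le_mul_of_nonneg_left hCS (by positivity)
      _ ≤ 2 * β ^ 2 * (N * (Real.exp (-(b * x)) / Real.sqrt (2 * b))) := by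
          rw [hsqrt2]
          refine mul_le_mul_of_nonneg_left ?_ (by positivity)
          exact mul_le_mul_of_nonneg_right (hIic_sqrt_le _ measurableSet_Ioi) (by positivity)
  have hFboundM : ∀ x, x ≤ 0 →
      |F x| ≤ 2 * β ^ 2 * (N * (Real.exp (b * x) / Real.sqrt (2 * b))) := by
    intro x hx
    have hecont : Continuous fun y : ℝ => Real.exp (b * y) :=
      Real.continuous_exp.comp (continuous_const.mul continuous_id)
    have he2int : IntegrableOn (fun y => Real.exp (b * y) ^ 2) (Iic x) := by
      refine (integrableOn_exp_mul_Iic h2b x).congr_fun (fun y _ => ?_) measurableSet_Iic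
      rw [exp_sq]; ring_nf
    have hCS : ∫ y in Iic x, h y * Real.exp (b * y) ≤
        Real.sqrt (∫ y in Iic x, h y ^ 2) *
          Real.sqrt (∫ y in Iic x, Real.exp (b * y) ^ 2) :=
      cauchy_schwarz_integral _ _ _ hhcont.aestronglyMeasurable.restrict
        hecont.aestronglyMeasurable.restrict hh2int.integrableOn he2int hhnn
        (fun y => Real.exp_nonneg _)
    have hval : ∫ y in Iic x, Real.exp (b * y) ^ 2 = Real.exp (2 * b * x) / (2 * b) := by
      rw [setIntegral_congr_fun measurableSet_Iic
        (g := fun y => Real.exp (2 * b * y)) (fun y _ => by rw [exp_sq]; ring_nf)]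
      exact integral_exp_mul_Iic h2b x
    have hsqrt2 : Real.sqrt (∫ y in Iic x, Real.exp (b * y) ^ 2)
        = Real.exp (b * x) / Real.sqrt (2 * b) := by
      rw [hval, show Real.exp (2 * b * x) = (Real.exp (b * x)) ^ 2 from by
        rw [exp_sq]; ring_nf, Real.sqrt_div (sq_nonneg _), Real.sqrt_sq (Real.exp_nonneg _)]
    have step1 : |F x| ≤ ∫ y in Iic x, |φ y| := by
      rw [hFneg x, abs_neg]
      have := norm_integral_le_integral_norm (μ := volume.restrict (Iic x)) φ
      simpa [Real.norm_eq_abs] using this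
    have hmaj : IntegrableOn (fun y => 2 * β ^ 2 * (h y * Real.exp (b * y))) (Iic x) := by
      have hmeme : MemLp (fun y => Real.exp (b * y)) 2 (volume.restrict (Iic x)) :=
        (memLp_two_iff_integrable_sq hecont.aestronglyMeasurable.restrict).2 he2int
      have hsm := MemLp.smul (r := 1) hmeme (hmemh2.restrict (Iic x))
      have hprod := memLp_one_iff_integrable.1 hsm
      have : Integrable (fun y => h y * Real.exp (b * y)) (volume.restrict (Iic x)) := by
        exact hprod
      exact this.const_mul _
    have step2 : ∫ y in Iic x, |φ y| ≤
        ∫ y in Iic x, 2 * β ^ 2 * (h y * Real.exp (b * y)) := by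
      refine integral_mono_of_nonneg (Eventually.of_forall fun y => abs_nonneg _) hmaj ?_
      refine (ae_restrict_iff' measurableSet_Iic).2 (Eventually.of_forall fun y hy => ?_)
      have hy0 : y ≤ 0 := le_trans hy hx
      have e1 : |φ y| = (h y * Real.cosh y ^ (κ / 2)) * Q c y := by
        simp only [hφdef]
        rw [abs_mul, abs_of_pos (hQpos y), habsf y]
      have e2 : (h y * Real.cosh y ^ (κ / 2)) * Q c y ≤
          (h y * Real.exp (-(κ / 2 * y))) * (2 * β ^ 2 * Real.exp (β * y)) := by
        have c1 : Real.cosh y ^ (κ / 2) ≤ Real.exp (-(κ / 2 * y)) := by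
          have := hcosh_rpow y; rw [abs_of_nonpos hy0] at this
          convert this using 2; ring
        have c2 : Q c y ≤ 2 * β ^ 2 * Real.exp (β * y) := by
          have := hQle y; rw [abs_of_nonpos hy0] at this
          convert this using 3; ring
        exact mul_le_mul (mul_le_mul_of_nonneg_left c1 (hhnn y)) c2 (hQpos y).le
          (mul_nonneg (hhnn y) (Real.exp_nonneg _))
      have e3 : (h y * Real.exp (-(κ / 2 * y))) * (2 * β ^ 2 * Real.exp (β * y)) =
          2 * β ^ 2 * (h y * Real.exp (b * y)) := by
        have e4 : Real.exp (-(κ / 2 * y)) * Real.exp (β * y) = Real.exp (b * y) := by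
          rw [← Real.exp_add]; congr 1; rw [hbdef]; ring
        calc (h y * Real.exp (-(κ / 2 * y))) * (2 * β ^ 2 * Real.exp (β * y))
            = 2 * β ^ 2 * (h y * (Real.exp (-(κ / 2 * y)) * Real.exp (β * y))) := by ring
          _ = _ := by rw [e4]
      calc |φ y| = (h y * Real.cosh y ^ (κ / 2)) * Q c y := e1
        _ ≤ (h y * Real.exp (-(κ / 2 * y))) * (2 * β ^ 2 * Real.exp (β * y)) := e2
        _ = _ := e3
    calc |F x| ≤ ∫ y in Iic x, |φ y| := step1
      _ ≤ ∫ y in Iic x, 2 * β ^ 2 * (h y * Real.exp (b * y)) := step2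
      _ = 2 * β ^ 2 * ∫ y in Iic x, h y * Real.exp (b * y) := integral_const_mul _ _
      _ ≤ 2 * β ^ 2 * (Real.sqrt (∫ y in Iic x, h y ^ 2) *
            Real.sqrt (∫ y in Iic x, Real.exp (b * y) ^ 2)) := by
          refine mul_le_mul_of_nonneg_left hCS (by positivity)
      _ ≤ 2 * β ^ 2 * (N * (Real.exp (b * x) / Real.sqrt (2 * b))) := by
          rw [hsqrt2]
          refine mul_le_mul_of_nonneg_left ?_ (by positivity)
          exact mul_le_mul_of_nonneg_right (hIic_sqrt_le _ measurableSet_Iic) (by positivity)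
  have hpt : ∀ x, rho x ^ κ * |(Q c x)⁻¹ * F x| ≤ A * N * Real.exp (-(κ / 2 * |x|)) := by
    intro x
    have habsQF : |(Q c x)⁻¹ * F x| = (Q c x)⁻¹ * |F x| := by
      rw [abs_mul, abs_of_pos (inv_pos.2 (hQpos x))]
    have hQFnn : 0 ≤ (Q c x)⁻¹ * |F x| := mul_nonneg (inv_pos.2 (hQpos x)).le (abs_nonneg _)
    rcases le_or_gt 0 x with hx | hx
    · rw [habsQF, abs_of_nonneg hx]
      have k1 : rho x ^ κ ≤ 2 ^ κ * Real.exp (-(κ * x)) := by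
        have := hrho_pow_le x; rwa [abs_of_nonneg hx] at this
      have k2 : (Q c x)⁻¹ ≤ 2 / β ^ 2 * Real.exp (β * x) := by
        have := hQinvle x; rwa [abs_of_nonneg hx] at this
      have k3 := hFboundP x hx
      have k4 : rho x ^ κ * ((Q c x)⁻¹ * |F x|) ≤
          (2 ^ κ * Real.exp (-(κ * x))) * ((2 / β ^ 2 * Real.exp (β * x)) *
            (2 * β ^ 2 * (N * (Real.exp (-(b * x)) / Real.sqrt (2 * b))))) := by
        refine mul_le_mul k1 (mul_le_mul k2 k3 (abs_nonneg _) (by positivity)) hQFnn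
          (by positivity)
      refine k4.trans_eq ?_
      have e6 : Real.exp (-(κ * x)) * Real.exp (β * x) * Real.exp (-(b * x)) =
          Real.exp (-(κ / 2 * x)) := by
        rw [← Real.exp_add, ← Real.exp_add]; congr 1; rw [hbdef]; ring
      rw [hAdef, ← e6]
      have hs2b := (Real.sqrt_pos.2 h2b).ne'
      field_simp
      ring
    · rw [habsQF, abs_of_nonpos hx.le]
      have k1 : rho x ^ κ ≤ 2 ^ κ * Real.exp (κ * x) := by
        have := hrho_pow_le x; rw [abs_of_nonpos hx.le] at this
        rwa [show Real.exp (-(κ * -x)) = Real.exp (κ * x) from congrArg Real.exp (by ring)]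
          at this
      have k2 : (Q c x)⁻¹ ≤ 2 / β ^ 2 * Real.exp (-(β * x)) := by
        have := hQinvle x; rw [abs_of_nonpos hx.le] at this
        rwa [show Real.exp (β * -x) = Real.exp (-(β * x)) from congrArg Real.exp (by ring)]
          at this
      have k3 := hFboundM x hx.le
      have k4 : rho x ^ κ * ((Q c x)⁻¹ * |F x|) ≤
          (2 ^ κ * Real.exp (κ * x)) * ((2 / β ^ 2 * Real.exp (-(β * x))) *
            (2 * β ^ 2 * (N * (Real.exp (b * x) / Real.sqrt (2 * b))))) := by
        refine mul_le_mul k1 (mul_le_mul k2 k3 (abs_nonneg _) (by positivity)) hQFnn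
          (by positivity)
      refine k4.trans_eq ?_
      have e6 : Real.exp (κ * x) * Real.exp (-(β * x)) * Real.exp (b * x) =
          Real.exp (-(κ / 2 * -x)) := by
        rw [← Real.exp_add, ← Real.exp_add]; congr 1; rw [hbdef]; ring
      rw [hAdef, ← e6]
      have hs2b := (Real.sqrt_pos.2 h2b).ne'
      field_simp
      ring
  have hterm1 : Real.sqrt (∫ x, (rho x ^ κ * ((Q c x)⁻¹ * F x)) ^ 2) ≤
      A * Real.sqrt (2 / κ) * N := by
    have hmono : ∫ x, (rho x ^ κ * ((Q c x)⁻¹ * F x)) ^ 2 ≤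
        ∫ x, (A * N) ^ 2 * Real.exp (-(κ * |x|)) := by
      refine integral_mono_of_nonneg (Eventually.of_forall fun x => sq_nonneg _)
        ((integrable_exp_neg_mul_abs hκ).const_mul _) (Eventually.of_forall fun x => ?_)
      have h1 : |rho x ^ κ * ((Q c x)⁻¹ * F x)| ≤ A * N * Real.exp (-(κ / 2 * |x|)) := by
        rw [abs_mul, abs_of_nonneg (hrpow_nonneg κ x)]
        exact hpt x
      calc (rho x ^ κ * ((Q c x)⁻¹ * F x)) ^ 2
          = |rho x ^ κ * ((Q c x)⁻¹ * F x)| ^ 2 := (sq_abs _).symm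
        _ ≤ (A * N * Real.exp (-(κ / 2 * |x|))) ^ 2 := pow_le_pow_left₀ (abs_nonneg _) h1 2
        _ = (A * N) ^ 2 * Real.exp (-(κ * |x|)) := by
            rw [mul_pow, exp_sq]; congr 2; ring
    rw [integral_const_mul, integral_exp_neg_mul_abs hκ] at hmono
    have := Real.sqrt_le_sqrt hmono
    refine this.trans_eq ?_
    rw [Real.sqrt_mul (sq_nonneg _), Real.sqrt_sq (by positivity : (0:ℝ) ≤ A * N)]
    ring
  have hDeq : ∀ x, deriv (fun z => (Q c z)⁻¹ * F z) x = T x * ((Q c x)⁻¹ * F x) - f x :=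
    fun x => (hGderiv x).deriv
  have hcoef : (0:ℝ) ≤ 4 * β ^ 2 * A ^ 2 / κ :=
    div_nonneg (by positivity) hκ.le
  have hterm2 : Real.sqrt (∫ x, (rho x ^ κ * deriv (fun z => (Q c z)⁻¹ * F z) x) ^ 2) ≤
      Real.sqrt (4 * β ^ 2 * A ^ 2 / κ + 2) * N := by
    have hintmaj : Integrable (fun x =>
        2 * (β * (A * N)) ^ 2 * Real.exp (-(κ * |x|)) + 2 * (rho x ^ (κ / 2) * f x) ^ 2) :=
      ((integrable_exp_neg_mul_abs hκ).const_mul _).add (hint_sq.const_mul 2)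
    have hmono : ∫ x, (rho x ^ κ * deriv (fun z => (Q c z)⁻¹ * F z) x) ^ 2 ≤
        ∫ x, (2 * (β * (A * N)) ^ 2 * Real.exp (-(κ * |x|))
          + 2 * (rho x ^ (κ / 2) * f x) ^ 2) := by
      refine integral_mono_of_nonneg (Eventually.of_forall fun x => sq_nonneg _)
        hintmaj (Eventually.of_forall fun x => ?_)
      beta_reduce
      rw [hDeq x]
      have hs : rho x ^ κ * |T x * ((Q c x)⁻¹ * F x)| ≤
          β * (A * N * Real.exp (-(κ / 2 * |x|))) := by
        rw [abs_mul]
        calc rho x ^ κ * (|T x| * |(Q c x)⁻¹ * F x|)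
            = |T x| * (rho x ^ κ * |(Q c x)⁻¹ * F x|) := by ring
          _ ≤ β * (A * N * Real.exp (-(κ / 2 * |x|))) :=
              mul_le_mul (hTle x) (hpt x)
                (mul_nonneg (hrpow_nonneg κ x) (abs_nonneg _)) hβ.le
      have ht : rho x ^ κ * |f x| ≤ rho x ^ (κ / 2) * |f x| := by
        refine mul_le_mul_of_nonneg_right ?_ (abs_nonneg _)
        exact Real.rpow_le_rpow_of_exponent_ge (hrhopos x) (hrho_le_one x) (by linarith)
      have htri : |rho x ^ κ * (T x * ((Q c x)⁻¹ * F x) - f x)| ≤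
          β * (A * N * Real.exp (-(κ / 2 * |x|))) + rho x ^ (κ / 2) * |f x| := by
        rw [abs_mul, abs_of_nonneg (hrpow_nonneg κ x)]
        have htri0 : |T x * ((Q c x)⁻¹ * F x) - f x| ≤
            |T x * ((Q c x)⁻¹ * F x)| + |f x| := by
          rw [sub_eq_add_neg]
          exact (abs_add_le _ _).trans_eq (by rw [abs_neg])
        calc rho x ^ κ * |T x * ((Q c x)⁻¹ * F x) - f x|
            ≤ rho x ^ κ * (|T x * ((Q c x)⁻¹ * F x)| + |f x|) :=
              mul_le_mul_of_nonneg_left htri0 (hrpow_nonneg κ x)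
          _ = rho x ^ κ * |T x * ((Q c x)⁻¹ * F x)| + rho x ^ κ * |f x| := mul_add _ _ _
          _ ≤ _ := add_le_add hs ht
      have hsq2 : ∀ u v w : ℝ, 0 ≤ v → 0 ≤ w → |u| ≤ v + w → u ^ 2 ≤ 2 * v ^ 2 + 2 * w ^ 2 := by
        intro u v w hv hw huvw
        have h0 : u ^ 2 = |u| ^ 2 := (sq_abs _).symm
        nlinarith [sq_nonneg (v - w), abs_nonneg u]
      have := hsq2 (rho x ^ κ * (T x * ((Q c x)⁻¹ * F x) - f x))
        (β * (A * N * Real.exp (-(κ / 2 * |x|)))) (rho x ^ (κ / 2) * |f x|)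
        (mul_nonneg hβ.le (mul_nonneg (mul_nonneg hA.le hN0) (Real.exp_nonneg _)))
        (mul_nonneg (hrpow_nonneg _ x) (abs_nonneg _)) htri
      refine this.trans_eq ?_
      have r1 : (A * N * Real.exp (-(κ / 2 * |x|))) ^ 2 = (A * N) ^ 2 * Real.exp (-(κ * |x|)) := by
        rw [mul_pow, exp_sq]; congr 2; ring
      have r2 : (rho x ^ (κ / 2) * |f x|) ^ 2 = (rho x ^ (κ / 2) * f x) ^ 2 := by
        rw [mul_pow, mul_pow, sq_abs]
      rw [mul_pow, r1, r2]
      ring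
    rw [integral_add ((integrable_exp_neg_mul_abs hκ).const_mul _) (hint_sq.const_mul 2),
      integral_const_mul, integral_const_mul, integral_exp_neg_mul_abs hκ, hN2] at hmono
    have := Real.sqrt_le_sqrt hmono
    refine this.trans_eq ?_
    have e7 : 2 * (β * (A * N)) ^ 2 * (2 / κ) + 2 * N ^ 2
        = (4 * β ^ 2 * A ^ 2 / κ + 2) * N ^ 2 := by
      field_simp
      ring
    rw [e7, Real.sqrt_mul (by linarith : (0:ℝ) ≤ 4 * β ^ 2 * A ^ 2 / κ + 2),
      Real.sqrt_sq hN0]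
  simp only [hFdef] at hterm1 hterm2
  refine le_trans (add_le_add hterm1 hterm2) (le_of_eq ?_)
  rw [hCdef]
  ring
end

section
/- For every κ > 0 there exists a constant C > 0 such that for every A > 0 and every continuously differentiable function f : ℝ → ℝ, one has ∫_0^A f(x)²·ρ(x)^κ dx ≤ C·( ∫_0^1 f² + ( ∫_0^A (f')² )^{1/2} · ( ∫_0^A f²·ρ^{2κ} )^{1/2} ), where ρ(x) = sech(x). -/
open Real MeasureTheory intervalIntegral

lemma rho_pos (x : ℝ) : 0 < rho x := inv_pos.2 (Real.cosh_pos x)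

lemma rho_le_one (x : ℝ) : rho x ≤ 1 := inv_le_one_of_one_le₀ (Real.one_le_cosh x)

lemma rho_continuous : Continuous rho :=
  Real.continuous_cosh.inv₀ fun x => (Real.cosh_pos x).ne'

lemma rho_anti {x y : ℝ} (hx : 0 ≤ x) (hxy : x ≤ y) : rho y ≤ rho x := by
  have h : Real.cosh x ≤ Real.cosh y := by
    rw [Real.cosh_le_cosh, abs_of_nonneg hx, abs_of_nonneg (hx.trans hxy)]
    exact hxy
  exact inv_anti₀ (Real.cosh_pos x) h

lemma tanh_mono {x y : ℝ} (h : x ≤ y) : Real.tanh x ≤ Real.tanh y := by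
  rw [Real.tanh_eq_sinh_div_cosh, Real.tanh_eq_sinh_div_cosh,
    div_le_div_iff₀ (Real.cosh_pos x) (Real.cosh_pos y)]
  have hs : 0 ≤ Real.sinh (y - x) := by
    rw [← Real.sinh_zero]; exact Real.sinh_le_sinh.2 (by linarith)
  rw [Real.sinh_sub] at hs
  linarith

lemma tanh_one_pos : 0 < Real.tanh 1 := by
  rw [Real.tanh_eq_sinh_div_cosh]
  exact div_pos (Real.sinh_pos_iff.2 one_pos) (Real.cosh_pos 1)

lemma rho_rpow_sq (x κ : ℝ) : (rho x ^ κ) ^ 2 = rho x ^ (2 * κ) := by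
  rw [← Real.rpow_natCast (rho x ^ κ) 2, ← Real.rpow_mul (rho_pos x).le]
  norm_num [mul_comm]

lemma cs_abs {a b : ℝ} (hab : a ≤ b) {u v : ℝ → ℝ} (hu : Continuous u) (hv : Continuous v) :
    (∫ x in a..b, |u x * v x|) ≤
      Real.sqrt (∫ x in a..b, u x ^ 2) * Real.sqrt (∫ x in a..b, v x ^ 2) := by
  set X := ∫ x in a..b, u x ^ 2 with hXdef
  set Y := ∫ x in a..b, v x ^ 2 with hYdef
  have hX : 0 ≤ X := intervalIntegral.integral_nonneg hab fun x _ => sq_nonneg _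
  have hY : 0 ≤ Y := intervalIntegral.integral_nonneg hab fun x _ => sq_nonneg _
  have key : ∀ t : ℝ, 0 < t →
      (∫ x in a..b, |u x * v x|) ≤ (Real.sqrt X + t) * (Real.sqrt Y + t) := by
    intro t ht
    have hsX : (0:ℝ) < Real.sqrt X + t := by positivity
    have hsY : (0:ℝ) < Real.sqrt Y + t := by positivity
    set ε : ℝ := (Real.sqrt Y + t) / (Real.sqrt X + t) with hεdef
    have hε0 : 0 < ε := div_pos hsY hsX
    have hεeq : ε * (Real.sqrt X + t) = Real.sqrt Y + t := div_mul_cancel₀ _ hsX.ne'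
    have step1 : (∫ x in a..b, |u x * v x|)
        ≤ ∫ x in a..b, (ε / 2 * u x ^ 2 + 1 / (2 * ε) * v x ^ 2) := by
      apply intervalIntegral.integral_mono_on hab
      · exact ((hu.mul hv).abs).intervalIntegrable _ _
      · exact ((continuous_const.mul (hu.pow 2)).add
          (continuous_const.mul (hv.pow 2))).intervalIntegrable _ _
      · intro x _
        rw [abs_mul, ← mul_le_mul_iff_of_pos_left (show (0:ℝ) < 2 * ε by positivity)]
        have h3 : (2 * ε) * (ε / 2 * u x ^ 2 + 1 / (2 * ε) * v x ^ 2)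
            = ε ^ 2 * u x ^ 2 + v x ^ 2 := by field_simp
        rw [h3]
        nlinarith [sq_nonneg (ε * |u x| - |v x|), sq_abs (u x), sq_abs (v x)]
    have step2 : (∫ x in a..b, (ε / 2 * u x ^ 2 + 1 / (2 * ε) * v x ^ 2))
        = ε / 2 * X + 1 / (2 * ε) * Y := by
      rw [intervalIntegral.integral_add (f := fun x => ε / 2 * u x ^ 2) (g := fun x => 1 / (2 * ε) * v x ^ 2)
          ((continuous_const.mul (hu.pow 2)).intervalIntegrable _ _)
          ((continuous_const.mul (hv.pow 2)).intervalIntegrable _ _),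
        intervalIntegral.integral_const_mul, intervalIntegral.integral_const_mul]
    have hX2 : X ≤ (Real.sqrt X + t) ^ 2 := by
      nlinarith [Real.sq_sqrt hX, Real.sqrt_nonneg X]
    have hY2 : Y ≤ (Real.sqrt Y + t) ^ 2 := by
      nlinarith [Real.sq_sqrt hY, Real.sqrt_nonneg Y]
    have h1 : ε ^ 2 * X ≤ (Real.sqrt Y + t) ^ 2 := by
      calc ε ^ 2 * X ≤ ε ^ 2 * (Real.sqrt X + t) ^ 2 := by nlinarith [sq_nonneg ε]
        _ = (ε * (Real.sqrt X + t)) ^ 2 := by ring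
        _ = (Real.sqrt Y + t) ^ 2 := by rw [hεeq]
    have hfin : ε / 2 * X + 1 / (2 * ε) * Y ≤ (Real.sqrt X + t) * (Real.sqrt Y + t) := by
      rw [← mul_le_mul_iff_of_pos_right (show (0:ℝ) < 2 * ε by positivity)]
      have lhs_eq : (ε / 2 * X + 1 / (2 * ε) * Y) * (2 * ε) = ε ^ 2 * X + Y := by
        field_simp
      have rhs_eq : (Real.sqrt X + t) * (Real.sqrt Y + t) * (2 * ε)
          = 2 * (Real.sqrt Y + t) ^ 2 := by
        linear_combination (2 * (Real.sqrt Y + t)) * hεeq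
      rw [lhs_eq, rhs_eq]
      linarith
    calc (∫ x in a..b, |u x * v x|) ≤ ε / 2 * X + 1 / (2 * ε) * Y := by
          rw [← step2]; exact step1
      _ ≤ (Real.sqrt X + t) * (Real.sqrt Y + t) := hfin
  refine le_of_forall_pos_le_add fun c hc => ?_
  set D : ℝ := Real.sqrt X + Real.sqrt Y + 1 with hDdef
  have hD : 0 < D := by positivity
  set t : ℝ := min 1 (c / D) with htdef
  have ht : 0 < t := lt_min one_pos (div_pos hc hD)
  have htD : t * D ≤ c := by
    have : t ≤ c / D := min_le_right _ _
    calc t * D ≤ c / D * D := by nlinarith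
      _ = c := div_mul_cancel₀ _ hD.ne'
  have ht1 : t ≤ 1 := min_le_left _ _
  have := key t ht
  nlinarith [Real.sqrt_nonneg X, Real.sqrt_nonneg Y, ht.le, htD, ht1]

lemma hasDerivAt_rho_rpow (κ x : ℝ) :
    HasDerivAt (fun y => rho y ^ κ) (-(κ * Real.tanh x * rho x ^ κ)) x := by
  have h1 : HasDerivAt (fun y => (Real.cosh y)⁻¹) (-(Real.sinh x) / Real.cosh x ^ 2) x :=
    (Real.hasDerivAt_cosh x).inv (Real.cosh_pos x).ne'
  have h2 := h1.rpow_const (p := κ) (Or.inl (by positivity))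
  have heq : -(Real.sinh x) / Real.cosh x ^ 2 * κ * (Real.cosh x)⁻¹ ^ (κ - 1)
      = -(κ * Real.tanh x * rho x ^ κ) := by
    have hr : (Real.cosh x)⁻¹ = rho x := rfl
    rw [hr, Real.rpow_sub (rho_pos x), Real.rpow_one, Real.tanh_eq_sinh_div_cosh]
    show -(Real.sinh x) / Real.cosh x ^ 2 * κ * (rho x ^ κ / rho x) = _
    rw [rho]
    have hc := (Real.cosh_pos x).ne'
    field_simp
  rw [← heq]
  exact h2

lemma hasDerivAt_f2rho (f : ℝ → ℝ) (hf : ContDiff ℝ 1 f) (κ x : ℝ) :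
    HasDerivAt (fun y => f y ^ 2 * rho y ^ κ)
      (2 * f x * deriv f x * rho x ^ κ - κ * Real.tanh x * (f x ^ 2 * rho x ^ κ)) x := by
  have hfd : HasDerivAt f (deriv f x) x :=
    (hf.differentiable (by norm_num) x).hasDerivAt
  have h1 : HasDerivAt (fun y => f y ^ 2) (2 * f x * deriv f x) x := by
    have := hfd.pow 2
    refine this.congr_deriv ?_
    push_cast
    ring
  have := h1.mul (hasDerivAt_rho_rpow κ x)
  refine this.congr_deriv ?_
  ring


set_option maxHeartbeats 1000000

/-- Localized weighted bound:
`∫_0^A f² ρ^κ ≲ ∫_0^1 f² + (∫_0^A (f')²)^{1/2} (∫_0^A f² ρ^{2κ})^{1/2}`. -/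
theorem localized_weighted_bound (κ : ℝ) (hκ : 0 < κ) :
    ∃ C > 0, ∀ A : ℝ, 0 < A → ∀ f : ℝ → ℝ, ContDiff ℝ 1 f →
      (∫ x in (0:ℝ)..A, f x ^ 2 * rho x ^ κ)
        ≤ C * ((∫ x in (0:ℝ)..1, f x ^ 2)
          + Real.sqrt (∫ x in (0:ℝ)..A, (deriv f x) ^ 2)
            * Real.sqrt (∫ x in (0:ℝ)..A, f x ^ 2 * rho x ^ (2 * κ))) := by
  set c₁ : ℝ := κ * Real.tanh 1 with hc₁def
  have hc₁ : 0 < c₁ := mul_pos hκ tanh_one_pos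
  set e : ℝ := (rho 1 ^ κ)⁻¹ with hedef
  have he : 0 < e := by
    have := rho_pos 1
    positivity
  refine ⟨1 + (2 * e + 3) / c₁, by positivity, ?_⟩
  intro A hA f hf
  have hfc : Continuous f := hf.continuous
  have hf'c : Continuous (deriv f) := hf.continuous_deriv le_rfl
  have hρκ : Continuous fun x => rho x ^ κ :=
    rho_continuous.rpow_const fun x => Or.inl (rho_pos x).ne'
  have hρ2κ : Continuous fun x => rho x ^ (2 * κ) :=
    rho_continuous.rpow_const fun x => Or.inl (rho_pos x).ne'
  have hint1 : Continuous fun x => f x ^ 2 * rho x ^ κ := (hfc.pow 2).mul hρκ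
  have hint2 : Continuous fun x => f x ^ 2 * rho x ^ (2 * κ) := (hfc.pow 2).mul hρ2κ
  set S := ∫ x in (0:ℝ)..1, f x ^ 2 with hSdef
  set X := ∫ x in (0:ℝ)..A, (deriv f x) ^ 2 with hXdef
  set Y := ∫ x in (0:ℝ)..A, f x ^ 2 * rho x ^ (2 * κ) with hYdef
  have hS : 0 ≤ S := intervalIntegral.integral_nonneg zero_le_one fun x _ => sq_nonneg _
  have hX0 : 0 ≤ X := intervalIntegral.integral_nonneg hA.le fun x _ => sq_nonneg _
  have hY0 : 0 ≤ Y := intervalIntegral.integral_nonneg hA.le fun x _ => by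
    have := rho_pos x
    positivity
  set T := Real.sqrt X * Real.sqrt Y with hTdef
  have hT : 0 ≤ T := mul_nonneg (Real.sqrt_nonneg _) (Real.sqrt_nonneg _)
  have hq : 0 ≤ (2 * e + 3) / c₁ := by positivity
  by_cases h1A : 1 ≤ A
  · -- main case : 1 ≤ A
    set I₀ := ∫ x in (0:ℝ)..1, f x ^ 2 * rho x ^ κ with hI₀def
    set I₁ := ∫ x in (1:ℝ)..A, f x ^ 2 * rho x ^ κ with hI₁def
    have hsplit : I₀ + I₁ = ∫ x in (0:ℝ)..A, f x ^ 2 * rho x ^ κ :=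
      intervalIntegral.integral_add_adjacent_intervals
        (hint1.intervalIntegrable _ _) (hint1.intervalIntegrable _ _)
    have b0 : I₀ ≤ S := by
      apply intervalIntegral.integral_mono_on zero_le_one (hint1.intervalIntegrable _ _)
        ((hfc.pow 2).intervalIntegrable _ _)
      intro x _
      have h1 : rho x ^ κ ≤ 1 := Real.rpow_le_one (rho_pos x).le (rho_le_one x) hκ.le
      have h2 : 0 ≤ rho x ^ κ := (Real.rpow_pos_of_pos (rho_pos x) κ).le
      show f x ^ 2 * rho x ^ κ ≤ f x ^ 2
      nlinarith [sq_nonneg (f x)]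
    -- bound on f 1 ^ 2
    have hsq : ∀ x : ℝ, HasDerivAt (fun z => f z ^ 2) (2 * (f x * deriv f x)) x := by
      intro x
      have := ((hf.differentiable (by norm_num) x).hasDerivAt).pow 2
      refine this.congr_deriv ?_
      push_cast
      ring
    have hcont2ff : Continuous fun x => 2 * (f x * deriv f x) :=
      continuous_const.mul (hfc.mul hf'c)
    have ptwise : ∀ y ∈ Set.Icc (0:ℝ) 1,
        f 1 ^ 2 ≤ f y ^ 2 + ∫ x in (0:ℝ)..1, |2 * (f x * deriv f x)| := by
      intro y hy
      have hftc : ∫ x in y..1, 2 * (f x * deriv f x) = f 1 ^ 2 - f y ^ 2 :=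
        intervalIntegral.integral_eq_sub_of_hasDerivAt (fun x _ => hsq x)
          (hcont2ff.intervalIntegrable _ _)
      have h1 : (∫ x in y..1, 2 * (f x * deriv f x))
          ≤ |∫ x in y..1, 2 * (f x * deriv f x)| := le_abs_self _
      have h2 : |∫ x in y..1, 2 * (f x * deriv f x)|
          ≤ ∫ x in y..1, |2 * (f x * deriv f x)| :=
        intervalIntegral.abs_integral_le_integral_abs hy.2
      have h3 : (∫ x in y..1, |2 * (f x * deriv f x)|)
          ≤ ∫ x in (0:ℝ)..1, |2 * (f x * deriv f x)| :=
        intervalIntegral.integral_mono_interval hy.1 hy.2 le_rfl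
          (ae_of_all _ fun x => abs_nonneg _) (hcont2ff.abs.intervalIntegrable _ _)
      linarith
    have hf1a : f 1 ^ 2 ≤ S + ∫ x in (0:ℝ)..1, |2 * (f x * deriv f x)| := by
      have h0 : f 1 ^ 2 = ∫ y in (0:ℝ)..1, f 1 ^ 2 := by simp
      rw [h0]
      have hmono := intervalIntegral.integral_mono_on (μ := volume) zero_le_one
        (continuous_const.intervalIntegrable _ _)
        (((hfc.pow 2).add continuous_const).intervalIntegrable _ _) ptwise
      calc (∫ y in (0:ℝ)..1, f 1 ^ 2)
          ≤ ∫ y in (0:ℝ)..1, (f y ^ 2 + ∫ x in (0:ℝ)..1, |2 * (f x * deriv f x)|) := hmono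
        _ = S + ∫ x in (0:ℝ)..1, |2 * (f x * deriv f x)| := by
            rw [intervalIntegral.integral_add (f := fun y => f y ^ 2) ((hfc.pow 2).intervalIntegrable _ _)
              intervalIntegrable_const]
            simp [hSdef]
    have habs2 : ∀ x : ℝ, |2 * (f x * deriv f x)| = 2 * |deriv f x * f x| := by
      intro x
      rw [abs_mul, abs_mul, abs_mul]
      norm_num
      ring
    have heq2 : (∫ x in (0:ℝ)..1, |2 * (f x * deriv f x)|)
        = 2 * ∫ x in (0:ℝ)..1, |deriv f x * f x| := by
      rw [← intervalIntegral.integral_const_mul]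
      exact intervalIntegral.integral_congr fun x _ => habs2 x
    have hCS0 : (∫ x in (0:ℝ)..1, |deriv f x * f x|)
        ≤ Real.sqrt (∫ x in (0:ℝ)..1, deriv f x ^ 2)
          * Real.sqrt (∫ x in (0:ℝ)..1, f x ^ 2) := cs_abs zero_le_one hf'c hfc
    have hXmono : Real.sqrt (∫ x in (0:ℝ)..1, deriv f x ^ 2) ≤ Real.sqrt X :=
      Real.sqrt_le_sqrt (intervalIntegral.integral_mono_interval le_rfl zero_le_one h1A
        (ae_of_all _ fun x => sq_nonneg _) ((hf'c.pow 2).intervalIntegrable _ _))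
    have hpt : ∀ y ∈ Set.Icc (0:ℝ) 1, f y ^ 2 ≤ e ^ 2 * (f y ^ 2 * rho y ^ (2 * κ)) := by
      intro y hy
      have hρ : rho 1 ≤ rho y := rho_anti hy.1 hy.2
      have hd : rho 1 ^ (2 * κ) ≤ rho y ^ (2 * κ) :=
        Real.rpow_le_rpow (rho_pos 1).le hρ (by positivity)
      have he2 : e ^ 2 * rho 1 ^ (2 * κ) = 1 := by
        rw [← rho_rpow_sq, hedef]
        have := (Real.rpow_pos_of_pos (rho_pos 1) κ).ne'
        field_simp
      have h1 : (1:ℝ) ≤ e ^ 2 * rho y ^ (2 * κ) := by nlinarith [sq_nonneg e]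
      nlinarith [sq_nonneg (f y)]
    have h01 : S ≤ e ^ 2 * ∫ y in (0:ℝ)..1, f y ^ 2 * rho y ^ (2 * κ) := by
      rw [← intervalIntegral.integral_const_mul]
      exact intervalIntegral.integral_mono_on zero_le_one
        ((hfc.pow 2).intervalIntegrable _ _)
        ((continuous_const.mul hint2).intervalIntegrable _ _) hpt
    have hYm : (∫ y in (0:ℝ)..1, f y ^ 2 * rho y ^ (2 * κ)) ≤ Y :=
      intervalIntegral.integral_mono_interval le_rfl zero_le_one h1A
        (ae_of_all _ fun x => by
          have := rho_pos x
          positivity) (hint2.intervalIntegrable _ _)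
    have hYcomp : Real.sqrt S ≤ e * Real.sqrt Y := by
      have h1 : S ≤ e ^ 2 * Y := by nlinarith [sq_nonneg e]
      calc Real.sqrt S ≤ Real.sqrt (e ^ 2 * Y) := Real.sqrt_le_sqrt h1
        _ = e * Real.sqrt Y := by
            rw [Real.sqrt_mul (sq_nonneg e), Real.sqrt_sq he.le]
    have hf1 : f 1 ^ 2 ≤ S + 2 * (e * T) := by
      have hchain : (∫ x in (0:ℝ)..1, |deriv f x * f x|) ≤ Real.sqrt X * (e * Real.sqrt Y) := by
        calc (∫ x in (0:ℝ)..1, |deriv f x * f x|)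
            ≤ Real.sqrt (∫ x in (0:ℝ)..1, deriv f x ^ 2) * Real.sqrt S := hCS0
          _ ≤ Real.sqrt X * (e * Real.sqrt Y) := by
              apply mul_le_mul hXmono hYcomp (Real.sqrt_nonneg _) (Real.sqrt_nonneg _)
      have : Real.sqrt X * (e * Real.sqrt Y) = e * T := by rw [hTdef]; ring
      rw [this] at hchain
      rw [heq2] at hf1a
      linarith
    -- middle estimate on [1, A]
    have hc1c : Continuous fun x => 2 * f x * deriv f x * rho x ^ κ :=
      (((continuous_const.mul hfc).mul hf'c)).mul hρκ
    have htanhc : Continuous Real.tanh := by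
      have h : Real.tanh = fun x => Real.sinh x / Real.cosh x :=
        funext fun x => Real.tanh_eq_sinh_div_cosh x
      rw [h]
      exact Real.continuous_sinh.div Real.continuous_cosh fun x => (Real.cosh_pos x).ne'
    have hc2c : Continuous fun x => κ * Real.tanh x * (f x ^ 2 * rho x ^ κ) :=
      (continuous_const.mul htanhc).mul hint1
    have hftcA : ∫ x in (1:ℝ)..A,
        (2 * f x * deriv f x * rho x ^ κ - κ * Real.tanh x * (f x ^ 2 * rho x ^ κ))
        = f A ^ 2 * rho A ^ κ - f 1 ^ 2 * rho 1 ^ κ :=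
      intervalIntegral.integral_eq_sub_of_hasDerivAt (fun x _ => hasDerivAt_f2rho f hf κ x)
        ((hc1c.sub hc2c).intervalIntegrable _ _)
    have hsubint : ∫ x in (1:ℝ)..A,
        (2 * f x * deriv f x * rho x ^ κ - κ * Real.tanh x * (f x ^ 2 * rho x ^ κ))
        = (∫ x in (1:ℝ)..A, 2 * f x * deriv f x * rho x ^ κ)
          - ∫ x in (1:ℝ)..A, κ * Real.tanh x * (f x ^ 2 * rho x ^ κ) :=
      intervalIntegral.integral_sub (hc1c.intervalIntegrable _ _) (hc2c.intervalIntegrable _ _)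
    have hmono1 : c₁ * I₁ ≤ ∫ x in (1:ℝ)..A, κ * Real.tanh x * (f x ^ 2 * rho x ^ κ) := by
      rw [← intervalIntegral.integral_const_mul]
      apply intervalIntegral.integral_mono_on h1A
        ((continuous_const.mul hint1).intervalIntegrable _ _) (hc2c.intervalIntegrable _ _)
      intro x hx
      have ht : Real.tanh 1 ≤ Real.tanh x := tanh_mono hx.1
      have hnn : 0 ≤ f x ^ 2 * rho x ^ κ :=
        mul_nonneg (sq_nonneg _) (Real.rpow_pos_of_pos (rho_pos x) κ).le
      show c₁ * (f x ^ 2 * rho x ^ κ) ≤ _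
      rw [hc₁def]
      exact mul_le_mul_of_nonneg_right (mul_le_mul_of_nonneg_left ht hκ.le) hnn
    have h2ff : (∫ x in (1:ℝ)..A, 2 * f x * deriv f x * rho x ^ κ)
        ≤ 2 * ∫ x in (1:ℝ)..A, |deriv f x * (f x * rho x ^ κ)| := by
      rw [← intervalIntegral.integral_const_mul]
      apply intervalIntegral.integral_mono_on h1A (hc1c.intervalIntegrable _ _)
        ((continuous_const.mul ((hf'c.mul (hfc.mul hρκ)).abs)).intervalIntegrable _ _)
      intro x _
      have h := le_abs_self (deriv f x * (f x * rho x ^ κ))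
      have heq : 2 * f x * deriv f x * rho x ^ κ
          = 2 * (deriv f x * (f x * rho x ^ κ)) := by ring
      rw [heq]
      show 2 * (deriv f x * (f x * rho x ^ κ)) ≤ 2 * |deriv f x * (f x * rho x ^ κ)|
      linarith
    have hCS1 : (∫ x in (1:ℝ)..A, |deriv f x * (f x * rho x ^ κ)|)
        ≤ Real.sqrt (∫ x in (1:ℝ)..A, deriv f x ^ 2)
          * Real.sqrt (∫ x in (1:ℝ)..A, (f x * rho x ^ κ) ^ 2) :=
      cs_abs h1A hf'c (hfc.mul hρκ)
    have hsq2 : (∫ x in (1:ℝ)..A, (f x * rho x ^ κ) ^ 2)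
        = ∫ x in (1:ℝ)..A, f x ^ 2 * rho x ^ (2 * κ) :=
      intervalIntegral.integral_congr fun x _ => by rw [mul_pow, rho_rpow_sq]
    have hXm1 : Real.sqrt (∫ x in (1:ℝ)..A, deriv f x ^ 2) ≤ Real.sqrt X :=
      Real.sqrt_le_sqrt (intervalIntegral.integral_mono_interval zero_le_one h1A le_rfl
        (ae_of_all _ fun x => sq_nonneg _) ((hf'c.pow 2).intervalIntegrable _ _))
    have hYm1 : Real.sqrt (∫ x in (1:ℝ)..A, (f x * rho x ^ κ) ^ 2) ≤ Real.sqrt Y := by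
      rw [hsq2]
      exact Real.sqrt_le_sqrt (intervalIntegral.integral_mono_interval zero_le_one h1A le_rfl
        (ae_of_all _ fun x => by
          have := rho_pos x
          positivity) (hint2.intervalIntegrable _ _))
    have hI1abs : (∫ x in (1:ℝ)..A, |deriv f x * (f x * rho x ^ κ)|) ≤ T := by
      calc (∫ x in (1:ℝ)..A, |deriv f x * (f x * rho x ^ κ)|)
          ≤ Real.sqrt (∫ x in (1:ℝ)..A, deriv f x ^ 2)
            * Real.sqrt (∫ x in (1:ℝ)..A, (f x * rho x ^ κ) ^ 2) := hCS1
        _ ≤ Real.sqrt X * Real.sqrt Y :=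
            mul_le_mul hXm1 hYm1 (Real.sqrt_nonneg _) (Real.sqrt_nonneg _)
    have hAterm : 0 ≤ f A ^ 2 * rho A ^ κ := by
      have := rho_pos A
      positivity
    have h1term : f 1 ^ 2 * rho 1 ^ κ ≤ f 1 ^ 2 := by
      have h1 : rho 1 ^ κ ≤ 1 := Real.rpow_le_one (rho_pos 1).le (rho_le_one 1) hκ.le
      have h2 : 0 ≤ rho 1 ^ κ := (Real.rpow_pos_of_pos (rho_pos 1) κ).le
      nlinarith [sq_nonneg (f 1)]
    have hmid : c₁ * I₁ ≤ f 1 ^ 2 + 2 * T := by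
      have := hftcA
      rw [hsubint] at this
      linarith
    have hI₁le : I₁ ≤ (f 1 ^ 2 + 2 * T) / c₁ := by
      rw [le_div_iff₀ hc₁]
      nlinarith
    have hnum : f 1 ^ 2 + 2 * T ≤ (2 * e + 3) * (S + T) := by nlinarith [he.le]
    have hfrac : (f 1 ^ 2 + 2 * T) / c₁ ≤ ((2 * e + 3) * (S + T)) / c₁ := by
      apply div_le_div_of_nonneg_right hnum hc₁.le
    have hexp : (1 + (2 * e + 3) / c₁) * (S + T) = (S + T) + ((2 * e + 3) * (S + T)) / c₁ := by
      field_simp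
    rw [← hsplit, hexp]
    linarith
  · -- case A < 1
    have hA1 : A ≤ 1 := le_of_not_ge h1A
    have b1 : (∫ x in (0:ℝ)..A, f x ^ 2 * rho x ^ κ) ≤ ∫ x in (0:ℝ)..A, f x ^ 2 := by
      apply intervalIntegral.integral_mono_on hA.le (hint1.intervalIntegrable _ _)
        ((hfc.pow 2).intervalIntegrable _ _)
      intro x _
      have h1 : rho x ^ κ ≤ 1 := Real.rpow_le_one (rho_pos x).le (rho_le_one x) hκ.le
      have h2 : 0 ≤ rho x ^ κ := (Real.rpow_pos_of_pos (rho_pos x) κ).le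
      show f x ^ 2 * rho x ^ κ ≤ f x ^ 2
      nlinarith [sq_nonneg (f x)]
    have b2 : (∫ x in (0:ℝ)..A, f x ^ 2) ≤ S :=
      intervalIntegral.integral_mono_interval le_rfl hA.le hA1
        (ae_of_all _ fun x => sq_nonneg _) ((hfc.pow 2).intervalIntegrable _ _)
    nlinarith
end
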